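/- arXiv:1104.2199 — 3 statements merged into one kernel-verified Lean document; each statement's English description precedes it below -/
import Mathlib

section
/- Let w be a locally integrable weight, Q₀ a dyadic cube with 0 < w(Q₀) < ∞, and let 𝓢(Q₀) be the stopping cubes of Q₀, i.e., 𝓢 = ⋃_{j≥0} 𝓢_j where 𝓢_0 = {Q₀} and 𝓢_{j+1} = ⋃_{S ∈ 𝓢_j} 𝓣(S), with 𝓣(S) the maximal dyadic subcubes S' of S satisfying w(S')/|S'| > 4 w(S)/|S|. Then Σ_{S ∈ 𝓢(Q₀)} w(S) ≤ C_d ‖w‖_{A_∞} w(Q₀), where ‖w‖_{A_∞} = sup_Q w(Q)^{-1} ∫_Q M(w 1_Q) dx and C_d is a dimensional constant. -/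
open MeasureTheory Set
open scoped ENNReal

/-- A dyadic cube in `ℝ^d`, given by a scale `k` and lower-corner integer coordinates `m`. -/
structure DyadicCube (d : ℕ) where
  k : ℤ
  m : Fin d → ℤ

/-- The subset of `ℝ^d` corresponding to a dyadic cube. -/
def DyadicCube.toSet {d : ℕ} (Q : DyadicCube d) : Set (Fin d → ℝ) :=
  Set.univ.pi fun i => Set.Ico ((Q.m i : ℝ) * 2 ^ Q.k) (((Q.m i : ℝ) + 1) * 2 ^ Q.k)

/-- An axis-parallel cube in `ℝ^d` with lower corner `a` and side length `s > 0`. -/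
structure Cube (d : ℕ) where
  a : Fin d → ℝ
  s : ℝ
  s_pos : 0 < s

/-- The subset of `ℝ^d` corresponding to a cube. -/
def Cube.toSet {d : ℕ} (Q : Cube d) : Set (Fin d → ℝ) :=
  Set.univ.pi fun i => Set.Ico (Q.a i) (Q.a i + Q.s)

/-- `u(E) = ∫_E u dx` for a weight `u`, as an extended nonnegative real. -/
noncomputable def wMeas {d : ℕ} (u : (Fin d → ℝ) → ℝ) (E : Set (Fin d → ℝ)) : ℝ≥0∞ :=
  ∫⁻ x in E, ENNReal.ofReal (u x)

/-- The (centered) Hardy–Littlewood maximal function. -/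
noncomputable def maxFn {d : ℕ} (f : (Fin d → ℝ) → ℝ) (x : Fin d → ℝ) : ℝ≥0∞ :=
  ⨆ (t : ℝ) (_ : 0 < t),
    (ENNReal.ofReal ((2 * t) ^ d))⁻¹ *
      ∫⁻ y in Set.univ.pi fun _ : Fin d => Set.Icc (-t) t, ENNReal.ofReal |f (x + y)|

/-- The Fujii–Wilson `A_∞` characteristic `‖w‖_{A_∞} = sup_Q w(Q)⁻¹ ∫_Q M(w 1_Q)`. -/
noncomputable def AinfChar {d : ℕ} (w : (Fin d → ℝ) → ℝ) : ℝ≥0∞ :=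
  ⨆ Q : Cube d, (wMeas w Q.toSet)⁻¹ * ∫⁻ x in Q.toSet, maxFn (Q.toSet.indicator w) x

/-- The average of `w` over `Q'` exceeds 4 times the average over `Q`. -/
noncomputable def BigAvg {d : ℕ} (w : (Fin d → ℝ) → ℝ) (Q' Q : DyadicCube d) : Prop :=
  4 * (wMeas w Q.toSet / volume Q.toSet) < wMeas w Q'.toSet / volume Q'.toSet

/-- `𝓣(S)`: the maximal dyadic subcubes `S' ⊆ S` with `w(S')/|S'| > 4 w(S)/|S|`. -/
def stoppingChildren {d : ℕ} (w : (Fin d → ℝ) → ℝ) (S : DyadicCube d) :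
    Set (DyadicCube d) :=
  {S' : DyadicCube d | S'.toSet ⊆ S.toSet ∧ BigAvg w S' S ∧
    ∀ S'' : DyadicCube d, S'.toSet ⊆ S''.toSet → S''.toSet ⊆ S.toSet →
      BigAvg w S'' S → S''.toSet = S'.toSet}

/-- The `j`-th generation of stopping cubes below `Q₀`. -/
def stoppingGen {d : ℕ} (w : (Fin d → ℝ) → ℝ) (Q₀ : DyadicCube d) :
    ℕ → Set (DyadicCube d)
  | 0 => {Q₀}
  | j + 1 => ⋃ S ∈ stoppingGen w Q₀ j, stoppingChildren w S

/-- The collection `𝓢(Q₀)` of stopping cubes of `Q₀`. -/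
def stoppingCubes {d : ℕ} (w : (Fin d → ℝ) → ℝ) (Q₀ : DyadicCube d) :
    Set (DyadicCube d) :=
  ⋃ j : ℕ, stoppingGen w Q₀ j

/-! ### Auxiliary lemmas -/

instance {d : ℕ} : Countable (DyadicCube d) :=
  Function.Injective.countable (f := fun Q : DyadicCube d => (Q.k, Q.m))
    (by rintro ⟨k, m⟩ ⟨k', m'⟩ h; simpa using h)

lemma DyadicCube.measurable {d : ℕ} (Q : DyadicCube d) : MeasurableSet Q.toSet :=
  MeasurableSet.univ_pi fun i => measurableSet_Ico

lemma DyadicCube.volume_eq {d : ℕ} (Q : DyadicCube d) :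
    volume Q.toSet = (ENNReal.ofReal ((2:ℝ) ^ Q.k)) ^ d := by
  rw [DyadicCube.toSet, volume_pi_pi]
  have : ∀ i : Fin d, volume (Set.Ico ((Q.m i : ℝ) * 2 ^ Q.k) (((Q.m i : ℝ) + 1) * 2 ^ Q.k))
      = ENNReal.ofReal ((2:ℝ) ^ Q.k) := by
    intro i; rw [Real.volume_Ico]; ring_nf
  simp [this]

lemma DyadicCube.vol_ne_zero {d : ℕ} (Q : DyadicCube d) : volume Q.toSet ≠ 0 := by
  rw [Q.volume_eq]; positivity

lemma DyadicCube.vol_ne_top {d : ℕ} (Q : DyadicCube d) : volume Q.toSet ≠ ∞ := by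
  rw [Q.volume_eq]; exact ENNReal.pow_ne_top ENNReal.ofReal_ne_top

lemma dyadic_interval_subset {k k' m m' : ℤ} (hk : k ≤ k')
    (h : (Set.Ico ((m:ℝ) * 2 ^ k) (((m:ℝ) + 1) * 2 ^ k) ∩
      Set.Ico ((m':ℝ) * 2 ^ k') (((m':ℝ) + 1) * 2 ^ k')).Nonempty) :
    Set.Ico ((m:ℝ) * 2 ^ k) (((m:ℝ) + 1) * 2 ^ k) ⊆
      Set.Ico ((m':ℝ) * 2 ^ k') (((m':ℝ) + 1) * 2 ^ k') := by
  obtain ⟨x, ⟨hx1, hx2⟩, ⟨hx3, hx4⟩⟩ := h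
  set e : ℕ := (k' - k).toNat with he
  have hke : k' = k + e := by omega
  have h2k : (0:ℝ) < 2 ^ k := by positivity
  have hsplit : (2:ℝ) ^ k' = 2 ^ (e:ℤ) * 2 ^ k := by
    rw [hke, ← zpow_add₀ (by norm_num : (2:ℝ) ≠ 0)]; ring_nf
  set y : ℝ := x / 2 ^ k with hy
  have hy1 : (m:ℝ) ≤ y := (le_div_iff₀ h2k).2 hx1
  have hy2 : y < (m:ℝ) + 1 := (div_lt_iff₀ h2k).2 hx2
  have hy3 : ((m' * 2 ^ e : ℤ) : ℝ) ≤ y := by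
    rw [le_div_iff₀ h2k]
    push_cast
    calc ((m':ℝ)) * 2 ^ e * 2 ^ k = (m':ℝ) * 2 ^ k' := by rw [hsplit, zpow_natCast]; ring
    _ ≤ x := hx3
  have hy4 : y < (((m' + 1) * 2 ^ e : ℤ) : ℝ) := by
    rw [div_lt_iff₀ h2k]
    push_cast
    calc x < ((m':ℝ) + 1) * 2 ^ k' := hx4
    _ = ((m':ℝ) + 1) * 2 ^ e * 2 ^ k := by rw [hsplit, zpow_natCast]; ring
  have hle : m' * 2 ^ e ≤ m := by
    have : ((m' * 2 ^ e : ℤ) : ℝ) < (m:ℝ) + 1 := lt_of_le_of_lt hy3 hy2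
    exact_mod_cast Int.lt_add_one_iff.1 (by exact_mod_cast this)
  have hlt : m + 1 ≤ (m' + 1) * 2 ^ e := by
    have : (m:ℝ) < ((m' + 1) * 2 ^ e : ℤ) := lt_of_le_of_lt hy1 hy4
    exact_mod_cast this
  intro z ⟨hz1, hz2⟩
  constructor
  · calc (m':ℝ) * 2 ^ k' = ((m' * 2 ^ e : ℤ) : ℝ) * 2 ^ k := by
          push_cast; rw [hsplit, zpow_natCast]; ring
    _ ≤ (m:ℝ) * 2 ^ k := by
          have : ((m' * 2 ^ e : ℤ) : ℝ) ≤ (m:ℝ) := by exact_mod_cast hle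
          nlinarith
    _ ≤ z := hz1
  · calc z < ((m:ℝ) + 1) * 2 ^ k := hz2
    _ ≤ (((m' + 1) * 2 ^ e : ℤ) : ℝ) * 2 ^ k := by
          have : ((m:ℝ) + 1) ≤ (((m' + 1) * 2 ^ e : ℤ) : ℝ) := by exact_mod_cast hlt
          nlinarith
    _ = ((m':ℝ) + 1) * 2 ^ k' := by push_cast; rw [hsplit, zpow_natCast]; ring

lemma DyadicCube.mem_toSet {d : ℕ} {Q : DyadicCube d} {x : Fin d → ℝ} :
    x ∈ Q.toSet ↔ ∀ i, x i ∈ Set.Ico ((Q.m i : ℝ) * 2 ^ Q.k) (((Q.m i : ℝ) + 1) * 2 ^ Q.k) := by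
  simp [DyadicCube.toSet, Set.mem_univ_pi]

lemma DyadicCube.subset_of_le {d : ℕ} {Q Q' : DyadicCube d} (hk : Q.k ≤ Q'.k)
    (h : ¬ Disjoint Q.toSet Q'.toSet) : Q.toSet ⊆ Q'.toSet := by
  obtain ⟨x, hx, hx'⟩ := Set.not_disjoint_iff.1 h
  intro z hz
  rw [DyadicCube.mem_toSet] at *
  intro i
  exact dyadic_interval_subset hk ⟨x i, hx i, hx' i⟩ (hz i)

lemma DyadicCube.subset_or_disjoint {d : ℕ} (Q Q' : DyadicCube d) :
    Q.toSet ⊆ Q'.toSet ∨ Q'.toSet ⊆ Q.toSet ∨ Disjoint Q.toSet Q'.toSet := by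
  by_cases h : Disjoint Q.toSet Q'.toSet
  · exact Or.inr (Or.inr h)
  rcases le_total Q.k Q'.k with hk | hk
  · exact Or.inl (DyadicCube.subset_of_le hk h)
  · exact Or.inr (Or.inl (DyadicCube.subset_of_le hk fun hd => h hd.symm))

lemma DyadicCube.corner_mem {d : ℕ} (Q : DyadicCube d) :
    (fun i => (Q.m i : ℝ) * 2 ^ Q.k) ∈ Q.toSet := by
  rw [DyadicCube.mem_toSet]
  intro i
  refine ⟨le_rfl, ?_⟩
  have : (0:ℝ) < 2 ^ Q.k := by positivity
  nlinarith

lemma DyadicCube.update_mem {d : ℕ} {Q : DyadicCube d} {x : Fin d → ℝ} (hx : x ∈ Q.toSet)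
    {i : Fin d} {r : ℝ} (hr : r ∈ Set.Ico ((Q.m i : ℝ) * 2 ^ Q.k) (((Q.m i : ℝ) + 1) * 2 ^ Q.k)) :
    Function.update x i r ∈ Q.toSet := by
  rw [DyadicCube.mem_toSet] at *
  intro j
  rcases eq_or_ne j i with rfl | hj
  · simpa using hr
  · simpa [Function.update_of_ne hj] using hx j

lemma DyadicCube.proj_eq {d : ℕ} {Q Q' : DyadicCube d} (h : Q.toSet = Q'.toSet) (i : Fin d) :
    Set.Ico ((Q.m i : ℝ) * 2 ^ Q.k) (((Q.m i : ℝ) + 1) * 2 ^ Q.k)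
      = Set.Ico ((Q'.m i : ℝ) * 2 ^ Q'.k) (((Q'.m i : ℝ) + 1) * 2 ^ Q'.k) := by
  ext r
  constructor
  · intro hr
    have hmem : Function.update (fun j => (Q.m j : ℝ) * 2 ^ Q.k) i r ∈ Q'.toSet :=
      h ▸ DyadicCube.update_mem Q.corner_mem hr
    simpa using DyadicCube.mem_toSet.1 hmem i
  · intro hr
    have hmem : Function.update (fun j => (Q'.m j : ℝ) * 2 ^ Q'.k) i r ∈ Q.toSet :=
      h ▸ DyadicCube.update_mem Q'.corner_mem hr
    simpa using DyadicCube.mem_toSet.1 hmem i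

lemma DyadicCube.toSet_inj {d : ℕ} (hd : 0 < d) {Q Q' : DyadicCube d}
    (h : Q.toSet = Q'.toSet) : Q = Q' := by
  have key : ∀ i : Fin d, (Q.m i : ℝ) * 2 ^ Q.k = (Q'.m i : ℝ) * 2 ^ Q'.k ∧
      ((Q.m i : ℝ) + 1) * 2 ^ Q.k = ((Q'.m i : ℝ) + 1) * 2 ^ Q'.k := by
    intro i
    have h2 : (0:ℝ) < 2 ^ Q.k := by positivity
    have := DyadicCube.proj_eq h i
    rw [Set.Ico_eq_Ico_iff (Or.inl (by nlinarith))] at this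
    exact this
  have i0 : Fin d := ⟨0, hd⟩
  have hk : (2:ℝ) ^ Q.k = 2 ^ Q'.k := by
    have h1 := (key i0).1
    have h2 := (key i0).2
    nlinarith
  have hkk : Q.k = Q'.k := by
    exact zpow_right_injective₀ (by norm_num) (by norm_num) hk
  have hm : Q.m = Q'.m := by
    funext i
    have h1 := (key i).1
    rw [hk] at h1
    have h2 : (0:ℝ) < 2 ^ Q'.k := by positivity
    have : (Q.m i : ℝ) = Q'.m i := by
      exact mul_right_cancel₀ h2.ne' h1
    exact_mod_cast this
  cases Q; cases Q'
  simp_all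

open scoped Pointwise in
lemma avg_le_maxFn {d : ℕ} {w : (Fin d → ℝ) → ℝ} (hw : ∀ x, 0 ≤ w x)
    {S Q₀ : DyadicCube d} (hSQ : S.toSet ⊆ Q₀.toSet) {x : Fin d → ℝ} (hx : x ∈ S.toSet) :
    wMeas w S.toSet / volume S.toSet ≤ 2 ^ d * maxFn (Q₀.toSet.indicator w) x := by
  set t : ℝ := 2 ^ S.k with ht
  have htpos : (0:ℝ) < t := by positivity
  set A : Set (Fin d → ℝ) := Set.univ.pi fun _ : Fin d => Set.Icc (-t) t with hA
  have hAmeas : MeasurableSet A := MeasurableSet.univ_pi fun _ => measurableSet_Icc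
  have hsub : ∀ z ∈ S.toSet, z ∈ x +ᵥ A := by
    intro z hz
    refine Set.mem_vadd_set.2 ⟨z - x, ?_, by simp [vadd_eq_add]⟩
    rw [hA, Set.mem_univ_pi]
    intro i
    have h1 := DyadicCube.mem_toSet.1 hz i
    have h2 := DyadicCube.mem_toSet.1 hx i
    simp only [Set.mem_Ico] at h1 h2
    simp only [Pi.sub_apply, Set.mem_Icc]
    constructor <;> nlinarith [h1.1, h1.2, h2.1, h2.2]
  set g : (Fin d → ℝ) → ℝ≥0∞ :=
    (x +ᵥ A).indicator (fun z => ENNReal.ofReal |Q₀.toSet.indicator w z|) with hg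
  have hkey : wMeas w S.toSet ≤ ∫⁻ y in A, ENNReal.ofReal |Q₀.toSet.indicator w (x + y)| := by
    have h2 : ∀ y, A.indicator (fun y => ENNReal.ofReal |Q₀.toSet.indicator w (x + y)|) y
        = g (x + y) := by
      intro y
      rw [hg]
      by_cases hy : y ∈ A
      · rw [Set.indicator_of_mem hy,
          Set.indicator_of_mem (Set.mem_vadd_set.2 ⟨y, hy, by simp [vadd_eq_add]⟩)]
      · rw [Set.indicator_of_notMem hy, Set.indicator_of_notMem (by
          intro hc
          obtain ⟨y', hy', hyy⟩ := Set.mem_vadd_set.1 hc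
          have : y' = y := by
            have h3 : x + y' = x + y := by simpa [vadd_eq_add] using hyy
            exact add_left_cancel h3
          exact hy (this ▸ hy'))]
    calc wMeas w S.toSet = ∫⁻ z, S.toSet.indicator (fun z => ENNReal.ofReal (w z)) z := by
          rw [wMeas, lintegral_indicator S.measurable]
    _ ≤ ∫⁻ z, g z := by
          refine lintegral_mono fun z => ?_
          by_cases hz : z ∈ S.toSet
          · rw [Set.indicator_of_mem hz, hg, Set.indicator_of_mem (hsub z hz),
              Set.indicator_of_mem (hSQ hz), abs_of_nonneg (hw z)]
          · rw [Set.indicator_of_notMem hz]; exact zero_le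
    _ = ∫⁻ y, g (x + y) := (lintegral_add_left_eq_self g x).symm
    _ = ∫⁻ y, A.indicator (fun y => ENNReal.ofReal |Q₀.toSet.indicator w (x + y)|) y := by
          simp_rw [h2]
    _ = ∫⁻ y in A, ENNReal.ofReal |Q₀.toSet.indicator w (x + y)| := lintegral_indicator hAmeas _
  have hM : (ENNReal.ofReal ((2 * t) ^ d))⁻¹ * wMeas w S.toSet
      ≤ maxFn (Q₀.toSet.indicator w) x := by
    refine le_trans ?_ (le_iSup₂ (f := fun (t : ℝ) (_ : 0 < t) =>
      (ENNReal.ofReal ((2 * t) ^ d))⁻¹ *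
        ∫⁻ y in Set.univ.pi fun _ : Fin d => Set.Icc (-t) t,
          ENNReal.ofReal |Q₀.toSet.indicator w (x + y)|) t htpos)
    exact mul_le_mul_right hkey _
  have hvol : ENNReal.ofReal ((2 * t) ^ d) = 2 ^ d * volume S.toSet := by
    rw [S.volume_eq, ENNReal.ofReal_pow (by positivity), ← ht, ← mul_pow,
      ENNReal.ofReal_mul (by norm_num)]
    norm_num
  have h2d : ((2:ℝ≥0∞) ^ d) ≠ 0 := by positivity
  have h2dt : ((2:ℝ≥0∞) ^ d) ≠ ∞ := ENNReal.pow_ne_top (by norm_num)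
  calc wMeas w S.toSet / volume S.toSet
      = 2 ^ d * ((ENNReal.ofReal ((2 * t) ^ d))⁻¹ * wMeas w S.toSet) := by
        rw [hvol, ENNReal.mul_inv (Or.inl h2d) (Or.inl h2dt), div_eq_mul_inv]
        rw [← mul_assoc, ← mul_assoc, ENNReal.mul_inv_cancel h2d h2dt, one_mul, mul_comm]
  _ ≤ 2 ^ d * maxFn (Q₀.toSet.indicator w) x := mul_le_mul_right hM _

/-! ### Structure of the stopping cubes -/

section Gen
variable {d : ℕ} {w : (Fin d → ℝ) → ℝ} {Q₀ : DyadicCube d}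

/-- abbreviation for the average -/
noncomputable def dAvg (w : (Fin d → ℝ) → ℝ) (Q : DyadicCube d) : ℝ≥0∞ :=
  wMeas w Q.toSet / volume Q.toSet

lemma bigAvg_congr {S T T' : DyadicCube d} (h : T.toSet = T'.toSet) :
    BigAvg w S T ↔ BigAvg w S T' := by
  unfold BigAvg; rw [h]

lemma not_bigAvg_self_set {S' S : DyadicCube d} (h : S'.toSet = S.toSet) :
    ¬ BigAvg w S' S := by
  intro hb
  unfold BigAvg at hb
  rw [h] at hb
  exact absurd hb (not_lt.2 (le_mul_of_one_le_left zero_le (by norm_num)))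

lemma toSet_dim0 (hd : d = 0) (Q : DyadicCube d) : Q.toSet = Set.univ := by
  subst hd
  ext x
  simp [DyadicCube.toSet]

lemma gen_subset (j : ℕ) {S : DyadicCube d} (hS : S ∈ stoppingGen w Q₀ j) :
    S.toSet ⊆ Q₀.toSet := by
  induction j generalizing S with
  | zero => simp only [stoppingGen, Set.mem_singleton_iff] at hS; subst hS; exact le_rfl
  | succ j ih =>
    simp only [stoppingGen, Set.mem_iUnion] at hS
    obtain ⟨T, hT, hS⟩ := hS
    exact hS.1.trans (ih hT)

lemma gen_avg (j : ℕ) {S : DyadicCube d} (hS : S ∈ stoppingGen w Q₀ j) :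
    4 ^ j * dAvg w Q₀ ≤ dAvg w S := by
  induction j generalizing S with
  | zero => simp only [stoppingGen, Set.mem_singleton_iff] at hS; subst hS; simp
  | succ j ih =>
    simp only [stoppingGen, Set.mem_iUnion] at hS
    obtain ⟨T, hT, hS⟩ := hS
    have h1 : 4 * (4 ^ j * dAvg w Q₀) ≤ 4 * dAvg w T := mul_le_mul_right (ih hT) 4
    have h2 : 4 * dAvg w T ≤ dAvg w S := le_of_lt hS.2.1
    calc (4:ℝ≥0∞) ^ (j+1) * dAvg w Q₀ = 4 * (4 ^ j * dAvg w Q₀) := by ring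
    _ ≤ dAvg w S := h1.trans h2

lemma gen_eq_or_disjoint (j : ℕ) {S S' : DyadicCube d}
    (hS : S ∈ stoppingGen w Q₀ j) (hS' : S' ∈ stoppingGen w Q₀ j) :
    S.toSet = S'.toSet ∨ Disjoint S.toSet S'.toSet := by
  induction j generalizing S S' with
  | zero =>
    simp only [stoppingGen, Set.mem_singleton_iff] at hS hS'
    subst hS; subst hS'; exact Or.inl rfl
  | succ j ih =>
    simp only [stoppingGen, Set.mem_iUnion] at hS hS'
    obtain ⟨T, hT, hS⟩ := hS
    obtain ⟨T', hT', hS'⟩ := hS'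
    rcases ih hT hT' with heq | hdisj
    · -- same parent (as sets); use maximality
      obtain ⟨hsub', hbig', hmax'⟩ := hS'
      rcases DyadicCube.subset_or_disjoint S S' with h | h | h
      · exact Or.inl (hS.2.2 S' h (hsub'.trans heq.symm.subset)
          ((bigAvg_congr heq).2 hbig')).symm
      · exact Or.inl (hmax' S h (hS.1.trans heq.subset)
          ((bigAvg_congr heq.symm).2 hS.2.1))
      · exact Or.inr h
    · exact Or.inr (hdisj.mono hS.1 hS'.1)

lemma gen_unique (j : ℕ) {S S' : DyadicCube d} {x : Fin d → ℝ}
    (hS : S ∈ stoppingGen w Q₀ j) (hS' : S' ∈ stoppingGen w Q₀ j)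
    (hx : x ∈ S.toSet) (hx' : x ∈ S'.toSet) : S = S' := by
  rcases Nat.eq_zero_or_pos d with hd | hd
  · -- dimension 0: all generations beyond 0 are empty
    cases j with
    | zero =>
      simp only [stoppingGen, Set.mem_singleton_iff] at hS hS'
      rw [hS, hS']
    | succ j =>
      exfalso
      simp only [stoppingGen, Set.mem_iUnion] at hS
      obtain ⟨T, _, hc⟩ := hS
      exact not_bigAvg_self_set (by rw [toSet_dim0 hd, toSet_dim0 hd]) hc.2.1
  · rcases gen_eq_or_disjoint j hS hS' with heq | hdisj
    · exact DyadicCube.toSet_inj hd heq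
    · exact absurd hdisj (Set.not_disjoint_iff.2 ⟨x, hx, hx'⟩)

lemma gen_chain (j : ℕ) {S S' : DyadicCube d} {x : Fin d → ℝ}
    (hS : S ∈ stoppingGen w Q₀ j) (hS' : S' ∈ stoppingGen w Q₀ (j+1))
    (hx : x ∈ S.toSet) (hx' : x ∈ S'.toSet) : 4 * dAvg w S ≤ dAvg w S' := by
  simp only [stoppingGen, Set.mem_iUnion] at hS'
  obtain ⟨T, hT, hc⟩ := hS'
  have hxT : x ∈ T.toSet := hc.1 hx'
  have : T = S := gen_unique j hT hS hxT hx
  subst this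
  exact le_of_lt hc.2.1

lemma gen_mono {j : ℕ} {S' : DyadicCube d} {x : Fin d → ℝ}
    (hS' : S' ∈ stoppingGen w Q₀ (j+1)) (hx' : x ∈ S'.toSet) :
    ∃ S ∈ stoppingGen w Q₀ j, x ∈ S.toSet := by
  simp only [stoppingGen, Set.mem_iUnion] at hS'
  obtain ⟨T, hT, hc⟩ := hS'
  exact ⟨T, hT, hc.1 hx'⟩

end Gen


lemma exists_pow_mul_gt {a B : ℝ≥0∞} (ha0 : a ≠ 0) (hat : a ≠ ∞) (hB : B ≠ ∞) :
    ∃ n : ℕ, B < 4 ^ n * a := by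
  obtain ⟨n, hn⟩ := pow_unbounded_of_one_lt (B.toReal / a.toReal) (by norm_num : (1:ℝ) < 4)
  refine ⟨n, ?_⟩
  have hfin2 : (4:ℝ≥0∞) ^ n * a ≠ ∞ := ENNReal.mul_ne_top (ENNReal.pow_ne_top (by norm_num)) hat
  rw [← ENNReal.toReal_lt_toReal hB hfin2, ENNReal.toReal_mul, ENNReal.toReal_pow]
  have ha' : 0 < a.toReal := ENNReal.toReal_pos ha0 hat
  have h44 : (4:ℝ≥0∞).toReal = (4:ℝ) := by norm_num
  rw [h44]
  calc B.toReal = B.toReal / a.toReal * a.toReal := by field_simp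
  _ < 4 ^ n * a.toReal := mul_lt_mul_of_pos_right hn ha'

lemma geom_tail (J : ℕ) (B : ℝ≥0∞) :
    ∑' j : ℕ, (if j ≤ J then (4⁻¹:ℝ≥0∞) ^ (J - j) * B else 0) ≤ 2 * B := by
  rw [tsum_eq_sum (s := Finset.range (J+1)) (by
    intro b hb
    simp only [Finset.mem_range] at hb
    rw [if_neg (by omega)])]
  have h1 : ∀ j ∈ Finset.range (J+1),
      (if j ≤ J then (4⁻¹:ℝ≥0∞) ^ (J - j) * B else 0) = (4⁻¹:ℝ≥0∞) ^ (J - j) * B := by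
    intro j hj
    simp only [Finset.mem_range] at hj
    rw [if_pos (by omega)]
  rw [Finset.sum_congr rfl h1]
  have h2 : ∑ j ∈ Finset.range (J+1), (4⁻¹:ℝ≥0∞) ^ (J - j) * B
      = ∑ i ∈ Finset.range (J+1), (4⁻¹:ℝ≥0∞) ^ i * B := by
    rw [← Finset.sum_range_reflect]
    refine Finset.sum_congr rfl fun j hj => ?_
    simp only [Finset.mem_range] at hj
    congr 2
    omega
  rw [h2]
  calc ∑ i ∈ Finset.range (J+1), (4⁻¹:ℝ≥0∞) ^ i * B
      ≤ ∑' i : ℕ, (4⁻¹:ℝ≥0∞) ^ i * B := ENNReal.sum_le_tsum _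
  _ = (∑' i : ℕ, (4⁻¹:ℝ≥0∞) ^ i) * B := by rw [ENNReal.tsum_mul_right]
  _ ≤ (∑' i : ℕ, (2⁻¹:ℝ≥0∞) ^ i) * B := by
      refine mul_le_mul_left (ENNReal.tsum_le_tsum fun i => ?_) _
      exact pow_le_pow_left₀ (by norm_num) (by
        rw [ENNReal.inv_le_inv]
        norm_num) i
  _ = 2 * B := by
      rw [ENNReal.tsum_geometric, ENNReal.one_sub_inv_two, inv_inv]

/-! ### Pointwise bound -/

lemma pointwise_bound {d : ℕ} {w : (Fin d → ℝ) → ℝ} (hw : ∀ x, 0 ≤ w x)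
    {Q₀ : DyadicCube d} (h0 : 0 < wMeas w Q₀.toSet) (hfin : wMeas w Q₀.toSet < ∞)
    {x : Fin d → ℝ} (hx : x ∈ Q₀.toSet) :
    ∑' j : ℕ, ∑' S : stoppingGen w Q₀ j,
        (S : DyadicCube d).toSet.indicator (fun _ => dAvg w (S : DyadicCube d)) x
      ≤ 2 * (2 ^ d * maxFn (Q₀.toSet.indicator w) x) := by
  set M : ℝ≥0∞ := maxFn (Q₀.toSet.indicator w) x with hM
  set B : ℝ≥0∞ := 2 ^ d * M with hB
  set I : ℕ → ℝ≥0∞ := fun j => ∑' S : stoppingGen w Q₀ j,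
      (S : DyadicCube d).toSet.indicator (fun _ => dAvg w (S : DyadicCube d)) x with hI
  set P : ℕ → Prop := fun j => ∃ S ∈ stoppingGen w Q₀ j, x ∈ S.toSet with hP
  have hP0 : P 0 := ⟨Q₀, by simp [stoppingGen], hx⟩
  have havgB : ∀ j S, S ∈ stoppingGen w Q₀ j → x ∈ S.toSet → dAvg w S ≤ B :=
    fun j S hS hxS => avg_le_maxFn hw (gen_subset j hS) hxS
  have ha0 : 0 < dAvg w Q₀ := ENNReal.div_pos h0.ne' Q₀.vol_ne_top
  have hIzero : ∀ j, ¬ P j → I j = 0 := by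
    intro j hj
    rw [hI]
    refine ENNReal.tsum_eq_zero.2 fun ⟨S, hS⟩ => ?_
    exact Set.indicator_of_notMem (fun hxS => hj ⟨S, hS, hxS⟩) _
  have hIval : ∀ j (S : DyadicCube d), S ∈ stoppingGen w Q₀ j → x ∈ S.toSet →
      I j = dAvg w S := by
    intro j S hS hxS
    have : I j = ∑' S' : stoppingGen w Q₀ j,
        (S' : DyadicCube d).toSet.indicator (fun _ => dAvg w (S' : DyadicCube d)) x := rfl
    rw [this, tsum_eq_single (⟨S, hS⟩ : stoppingGen w Q₀ j)]
    · exact Set.indicator_of_mem hxS _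
    · rintro ⟨S', hS'⟩ hne
      refine Set.indicator_of_notMem (fun hxS' => hne ?_) _
      exact Subtype.ext (gen_unique j hS' hS hxS' hxS)
  by_cases hMtop : M = ∞
  · have hBtop : B = ∞ := by
      rw [hB, hMtop, ENNReal.mul_top (by positivity)]
    rw [hBtop, ENNReal.mul_top (by norm_num)]
    exact le_top
  -- bounded case
  have hBfin : B ≠ ∞ := by
    rw [hB]; exact ENNReal.mul_ne_top (ENNReal.pow_ne_top (by norm_num)) hMtop
  have hbdd : ∀ j, P j → 4 ^ j * dAvg w Q₀ ≤ B := by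
    rintro j ⟨S, hS, hxS⟩
    exact (gen_avg j hS).trans (havgB j S hS hxS)
  have ha0fin : dAvg w Q₀ ≠ ∞ := (ENNReal.div_lt_top hfin.ne Q₀.vol_ne_zero).ne
  obtain ⟨n₀, hn₀⟩ : ∃ n₀ : ℕ, B < 4 ^ n₀ * dAvg w Q₀ :=
    exists_pow_mul_gt ha0.ne' ha0fin hBfin
  classical
  have hnP : ∀ j, P j → j ≤ Nat.findGreatest P n₀ := by
    intro j hj
    have hjn : j ≤ n₀ := by
      by_contra hc
      push_neg at hc
      have h1 : (4:ℝ≥0∞) ^ n₀ * dAvg w Q₀ ≤ 4 ^ j * dAvg w Q₀ :=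
        mul_le_mul_left (pow_le_pow_right₀ (by norm_num : (1:ℝ≥0∞) ≤ 4) hc.le) _
      exact absurd (hbdd j hj) (not_le.2 (lt_of_lt_of_le hn₀ h1))
    exact Nat.le_findGreatest hjn hj
  set J : ℕ := Nat.findGreatest P n₀ with hJ
  have hPJ : P J := Nat.findGreatest_spec (Nat.zero_le n₀) hP0
  have hPstep : ∀ j, P (j+1) → P j := by
    rintro j ⟨S', hS', hxS'⟩
    exact gen_mono hS' hxS'
  have hPdown : ∀ i j, P (j + i) → P j := by
    intro i
    induction i with
    | zero => exact fun j h => h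
    | succ i ih => exact fun j h => ih j (hPstep _ (by rwa [← Nat.add_assoc] at h))
  have hPall : ∀ j, j ≤ J → P j := by
    intro j hj
    exact hPdown (J - j) j (by rwa [Nat.add_sub_cancel' hj])
  choose Sc hSc hxSc using fun j (hj : P j) => hj
  have hchain : ∀ i j (hj : P j), j + i = J → 4 ^ i * dAvg w (Sc j hj) ≤ B := by
    intro i
    induction i with
    | zero =>
      intro j hj _
      rw [pow_zero, one_mul]
      exact havgB j _ (hSc j hj) (hxSc j hj)
    | succ i ih =>
      intro j hj hij
      have hj1 : P (j+1) := hPall (j+1) (by omega)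
      have hstep : 4 * dAvg w (Sc j hj) ≤ dAvg w (Sc (j+1) hj1) :=
        gen_chain j (hSc j hj) (hSc (j+1) hj1) (hxSc j hj) (hxSc (j+1) hj1)
      calc 4 ^ (i+1) * dAvg w (Sc j hj) = 4 ^ i * (4 * dAvg w (Sc j hj)) := by
            rw [← mul_assoc, ← pow_succ]
      _ ≤ 4 ^ i * dAvg w (Sc (j+1) hj1) := mul_le_mul_right hstep _
      _ ≤ B := ih (j+1) hj1 (by omega)
  have hIbound : ∀ j, I j ≤ (if j ≤ J then (4⁻¹:ℝ≥0∞) ^ (J - j) * B else 0) := by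
    intro j
    by_cases hj : j ≤ J
    · rw [if_pos hj]
      have hPj := hPall j hj
      rw [hIval j _ (hSc j hPj) (hxSc j hPj)]
      have h4 : ((4:ℝ≥0∞) ^ (J - j)) ≠ 0 := by positivity
      have h4t : ((4:ℝ≥0∞) ^ (J - j)) ≠ ∞ := ENNReal.pow_ne_top (by norm_num)
      have hch := hchain (J - j) j hPj (by omega)
      calc dAvg w (Sc j hPj)
          = (4 ^ (J - j))⁻¹ * (4 ^ (J - j) * dAvg w (Sc j hPj)) := by
            rw [← mul_assoc, ENNReal.inv_mul_cancel h4 h4t, one_mul]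
      _ ≤ (4 ^ (J - j))⁻¹ * B := mul_le_mul_right hch _
      _ = (4⁻¹ : ℝ≥0∞) ^ (J - j) * B := by rw [ENNReal.inv_pow]
    · rw [if_neg hj, hIzero j (fun hp => hj (hnP j hp))]
  calc ∑' j : ℕ, I j ≤ ∑' j : ℕ, (if j ≤ J then (4⁻¹:ℝ≥0∞) ^ (J - j) * B else 0) :=
        ENNReal.tsum_le_tsum hIbound
  _ ≤ 2 * B := geom_tail J B

set_option maxHeartbeats 1000000 in
/-- `Σ_{S ∈ 𝓢(Q₀)} w(S) ≤ C_d ‖w‖_{A_∞} w(Q₀)` for a dimensional constant `C_d`. -/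
theorem stmt6 (d : ℕ) :
    ∃ C : ℝ, 0 < C ∧
      ∀ (w : (Fin d → ℝ) → ℝ), LocallyIntegrable w volume → (∀ x, 0 ≤ w x) →
        ∀ Q₀ : DyadicCube d, 0 < wMeas w Q₀.toSet → wMeas w Q₀.toSet < ∞ →
          ∑' S : stoppingCubes w Q₀, wMeas w (S : DyadicCube d).toSet
            ≤ ENNReal.ofReal C * AinfChar w * wMeas w Q₀.toSet := by
  refine ⟨2 ^ (d+1), by positivity, ?_⟩
  intro w hloc hw Q₀ h0 hfin
  -- the A∞ characteristic dominates the averaged maximal function on Q₀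
  have hAinf : ∫⁻ x in Q₀.toSet, maxFn (Q₀.toSet.indicator w) x
      ≤ AinfChar w * wMeas w Q₀.toSet := by
    set QC : Cube d := ⟨fun i => (Q₀.m i : ℝ) * 2 ^ Q₀.k, 2 ^ Q₀.k, by positivity⟩ with hQCdef
    have hQC : QC.toSet = Q₀.toSet := by
      unfold Cube.toSet DyadicCube.toSet
      have : ∀ i : Fin d, Set.Ico (QC.a i) (QC.a i + QC.s)
          = Set.Ico ((Q₀.m i : ℝ) * 2 ^ Q₀.k) (((Q₀.m i : ℝ) + 1) * 2 ^ Q₀.k) := by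
        intro i
        have h1 : QC.a i = (Q₀.m i : ℝ) * 2 ^ Q₀.k := rfl
        have h2 : QC.a i + QC.s = ((Q₀.m i : ℝ) + 1) * 2 ^ Q₀.k := by
          rw [h1]; show (Q₀.m i : ℝ) * 2 ^ Q₀.k + 2 ^ Q₀.k = _; ring
        rw [h1, h2]
      simp_rw [this]
    have hle : (wMeas w Q₀.toSet)⁻¹ * ∫⁻ x in Q₀.toSet, maxFn (Q₀.toSet.indicator w) x
        ≤ AinfChar w := by
      have := le_iSup (f := fun Q : Cube d =>
        (wMeas w Q.toSet)⁻¹ * ∫⁻ x in Q.toSet, maxFn (Q.toSet.indicator w) x) QC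
      rwa [hQC] at this
    calc ∫⁻ x in Q₀.toSet, maxFn (Q₀.toSet.indicator w) x
        = wMeas w Q₀.toSet * ((wMeas w Q₀.toSet)⁻¹
            * ∫⁻ x in Q₀.toSet, maxFn (Q₀.toSet.indicator w) x) := by
          rw [← mul_assoc, ENNReal.mul_inv_cancel h0.ne' hfin.ne, one_mul]
    _ ≤ wMeas w Q₀.toSet * AinfChar w := mul_le_mul_right hle _
    _ = AinfChar w * wMeas w Q₀.toSet := mul_comm _ _
  have hby : ∀ (j : ℕ) (S : DyadicCube d), S ∈ stoppingGen w Q₀ j →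
      wMeas w S.toSet = ∫⁻ x in Q₀.toSet, S.toSet.indicator (fun _ => dAvg w S) x := by
    intro j S hS
    rw [lintegral_indicator S.measurable, setLIntegral_const,
      Measure.restrict_apply S.measurable,
      Set.inter_eq_self_of_subset_left (gen_subset j hS)]
    exact (ENNReal.div_mul_cancel S.vol_ne_zero S.vol_ne_top).symm
  calc ∑' S : stoppingCubes w Q₀, wMeas w (S : DyadicCube d).toSet
      ≤ ∑' (j : ℕ), ∑' S : stoppingGen w Q₀ j, wMeas w (S : DyadicCube d).toSet := by
        unfold stoppingCubes
        have h := ENNReal.tsum_iUnion_le_tsum (fun S : DyadicCube d => wMeas w S.toSet)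
          (stoppingGen w Q₀)
        exact h
  _ = ∑' (j : ℕ), ∑' S : stoppingGen w Q₀ j, ∫⁻ x in Q₀.toSet,
        (S : DyadicCube d).toSet.indicator (fun _ => dAvg w (S : DyadicCube d)) x :=
      tsum_congr fun j => tsum_congr fun S => hby j S S.2
  _ = ∑' (j : ℕ), ∫⁻ x in Q₀.toSet, ∑' S : stoppingGen w Q₀ j,
        (S : DyadicCube d).toSet.indicator (fun _ => dAvg w (S : DyadicCube d)) x :=
      tsum_congr fun j => (lintegral_tsum
        (f := fun (S : stoppingGen w Q₀ j) (x : Fin d → ℝ) =>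
          (S : DyadicCube d).toSet.indicator (fun _ => dAvg w (S : DyadicCube d)) x)
        fun S => ((measurable_const.indicator (S : DyadicCube d).measurable).aemeasurable)).symm
  _ = ∫⁻ x in Q₀.toSet, ∑' (j : ℕ), ∑' S : stoppingGen w Q₀ j,
        (S : DyadicCube d).toSet.indicator (fun _ => dAvg w (S : DyadicCube d)) x :=
      (lintegral_tsum
        (f := fun (j : ℕ) (x : Fin d → ℝ) => ∑' S : stoppingGen w Q₀ j,
          (S : DyadicCube d).toSet.indicator (fun _ => dAvg w (S : DyadicCube d)) x)
        fun j => (Measurable.ennreal_tsum fun S : stoppingGen w Q₀ j =>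
          measurable_const.indicator (S : DyadicCube d).measurable).aemeasurable).symm
  _ ≤ ∫⁻ x in Q₀.toSet, 2 * (2 ^ d * maxFn (Q₀.toSet.indicator w) x) :=
      setLIntegral_mono' Q₀.measurable fun x hx => pointwise_bound hw h0 hfin hx
  _ = 2 ^ (d+1) * ∫⁻ x in Q₀.toSet, maxFn (Q₀.toSet.indicator w) x := by
      simp_rw [← mul_assoc]
      rw [lintegral_const_mul' _ _ (by
        exact ENNReal.mul_ne_top (by norm_num) (ENNReal.pow_ne_top (by norm_num)))]
      congr 1
      rw [pow_succ]
      ring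
  _ ≤ 2 ^ (d+1) * (AinfChar w * wMeas w Q₀.toSet) := mul_le_mul_right hAinf _
  _ = ENNReal.ofReal (2 ^ (d+1)) * AinfChar w * wMeas w Q₀.toSet := by
      rw [ENNReal.ofReal_pow (by norm_num), ENNReal.ofReal_ofNat, mul_assoc]
end

section
/- Let w be a locally integrable weight and Q₀ a dyadic cube with 0 < w(Q₀) < ∞, and let 𝓢(Q₀) be the stopping cubes built with threshold 4 as above. Then the pointwise bound Σ_{S ∈ 𝓢(Q₀)} (w(S)/|S|) 1_S(x) ≤ C_d M(w 1_{Q₀})(x) holds for a.e. x ∈ Q₀, where M is the Hardy–Littlewood maximal operator and C_d a dimensional constant. -/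
open MeasureTheory Set
open scoped ENNReal

namespace Aux7
variable {d : ℕ}

lemma mem_toSet {Q : DyadicCube d} {z : Fin d → ℝ} :
    z ∈ Q.toSet ↔ ∀ i, (Q.m i : ℝ) * 2 ^ Q.k ≤ z i ∧ z i < ((Q.m i : ℝ) + 1) * 2 ^ Q.k := by
  simp [DyadicCube.toSet, Set.mem_pi]

lemma subset_of_k_le {S S' : DyadicCube d} (hk : S.k ≤ S'.k) {x : Fin d → ℝ}
    (hx : x ∈ S.toSet) (hx' : x ∈ S'.toSet) : S.toSet ⊆ S'.toSet := by
  intro z hz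
  rw [mem_toSet] at hx hx' hz ⊢
  intro i
  obtain ⟨h1, h2⟩ := hx i
  obtain ⟨h3, h4⟩ := hx' i
  obtain ⟨h5, h6⟩ := hz i
  set e : ℕ := (S'.k - S.k).toNat with he
  have hke : S'.k = S.k + (e : ℤ) := by omega
  have hpow : (2 : ℝ) ^ S'.k = 2 ^ S.k * 2 ^ e := by
    rw [hke, zpow_add₀ (two_ne_zero), zpow_natCast]
  have hp : (0 : ℝ) < 2 ^ S.k := zpow_pos (by norm_num) _
  have hr1 : (S'.m i : ℝ) * 2 ^ e < (S.m i : ℝ) + 1 := by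
    have h := h3.trans_lt h2
    rw [hpow, show (S'.m i : ℝ) * (2 ^ S.k * 2 ^ e) = (S'.m i * 2 ^ e) * 2 ^ S.k from by ring]
      at h
    exact (mul_lt_mul_iff_left₀ hp).mp h
  have hi1 : S'.m i * 2 ^ e ≤ S.m i := by
    have h : (S'.m i * 2 ^ e : ℤ) < S.m i + 1 := by exact_mod_cast hr1
    omega
  have hr2 : (S.m i : ℝ) < (S'.m i : ℝ) * 2 ^ e + 2 ^ e := by
    have h := h1.trans_lt h4
    rw [hpow, show ((S'.m i : ℝ) + 1) * (2 ^ S.k * 2 ^ e)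
        = ((S'.m i) * 2 ^ e + 2 ^ e) * 2 ^ S.k from by ring] at h
    exact (mul_lt_mul_iff_left₀ hp).mp h
  have hi2 : S.m i + 1 ≤ S'.m i * 2 ^ e + 2 ^ e := by
    have h : (S.m i : ℤ) < S'.m i * 2 ^ e + 2 ^ e := by exact_mod_cast hr2
    omega
  have hc1 : ((S'.m i : ℝ)) * 2 ^ e ≤ S.m i := by exact_mod_cast hi1
  have hc2 : ((S.m i : ℝ) + 1) ≤ (S'.m i : ℝ) * 2 ^ e + 2 ^ e := by exact_mod_cast hi2
  constructor
  · calc (S'.m i : ℝ) * 2 ^ S'.k = (S'.m i * 2 ^ e) * 2 ^ S.k := by rw [hpow]; ring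
      _ ≤ S.m i * 2 ^ S.k := mul_le_mul_of_nonneg_right hc1 hp.le
      _ ≤ z i := h5
  · calc z i < ((S.m i : ℝ) + 1) * 2 ^ S.k := h6
      _ ≤ ((S'.m i : ℝ) * 2 ^ e + 2 ^ e) * 2 ^ S.k := mul_le_mul_of_nonneg_right hc2 hp.le
      _ = ((S'.m i : ℝ) + 1) * 2 ^ S'.k := by rw [hpow]; ring

lemma nested {S S' : DyadicCube d} {x : Fin d → ℝ}
    (hx : x ∈ S.toSet) (hx' : x ∈ S'.toSet) : S.toSet ⊆ S'.toSet ∨ S'.toSet ⊆ S.toSet := by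
  rcases le_total S.k S'.k with h | h
  · exact Or.inl (subset_of_k_le h hx hx')
  · exact Or.inr (subset_of_k_le h hx' hx)


variable {d : ℕ}

lemma Ico_eq_endpoints {a b c e : ℝ} (hab : a < b) (hce : c < e)
    (h : Set.Ico a b = Set.Ico c e) : a = c ∧ b = e := by
  have h1 : a ∈ Set.Ico c e := h ▸ ⟨le_rfl, hab⟩
  have h2 : c ∈ Set.Ico a b := h.symm ▸ ⟨le_rfl, hce⟩
  have hac : a = c := le_antisymm h2.1 h1.1
  subst hac
  refine ⟨rfl, ?_⟩
  rcases lt_trichotomy b e with hlt | heq | hgt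
  · have hb : b ∈ Set.Ico a e := ⟨hab.le, hlt⟩
    rw [← h] at hb
    exact absurd hb.2 (lt_irrefl b)
  · exact heq
  · have hb : e ∈ Set.Ico a b := ⟨hce.le, hgt⟩
    rw [h] at hb
    exact absurd hb.2 (lt_irrefl e)

lemma corner_mem (Q : DyadicCube d) : (fun i => (Q.m i : ℝ) * 2 ^ Q.k) ∈ Q.toSet := by
  rw [mem_toSet]
  intro i
  have hp : (0 : ℝ) < 2 ^ Q.k := zpow_pos (by norm_num) _
  constructor
  · exact le_refl _
  · nlinarith

lemma toSet_inj (hd : d ≠ 0) {S S' : DyadicCube d} (h : S.toSet = S'.toSet) : S = S' := by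
  have hp : (0 : ℝ) < 2 ^ S.k := zpow_pos (by norm_num) _
  have hp' : (0 : ℝ) < 2 ^ S'.k := zpow_pos (by norm_num) _
  have hIco : ∀ i, Set.Ico ((S.m i : ℝ) * 2 ^ S.k) (((S.m i : ℝ) + 1) * 2 ^ S.k)
      = Set.Ico ((S'.m i : ℝ) * 2 ^ S'.k) (((S'.m i : ℝ) + 1) * 2 ^ S'.k) := by
    intro i
    ext r
    constructor
    · intro hr
      have hz : Function.update (fun j => (S.m j : ℝ) * 2 ^ S.k) i r ∈ S.toSet := by
        rw [mem_toSet]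
        intro j
        rcases eq_or_ne j i with rfl | hne
        · simpa using hr
        · simp only [Function.update_of_ne hne]
          constructor
          · exact le_refl _
          · nlinarith
      have hz' := h ▸ hz
      rw [mem_toSet] at hz'
      simpa using hz' i
    · intro hr
      have hz : Function.update (fun j => (S'.m j : ℝ) * 2 ^ S'.k) i r ∈ S'.toSet := by
        rw [mem_toSet]
        intro j
        rcases eq_or_ne j i with rfl | hne
        · simpa using hr
        · simp only [Function.update_of_ne hne]
          constructor
          · exact le_refl _
          · nlinarith
      have hz' := h.symm ▸ hz
      rw [mem_toSet] at hz'
      simpa using hz' i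
  have hend : ∀ i, (S.m i : ℝ) * 2 ^ S.k = (S'.m i : ℝ) * 2 ^ S'.k ∧
      ((S.m i : ℝ) + 1) * 2 ^ S.k = ((S'.m i : ℝ) + 1) * 2 ^ S'.k := by
    intro i
    exact Ico_eq_endpoints (by nlinarith) (by nlinarith) (hIco i)
  have i0 : Fin d := ⟨0, Nat.pos_of_ne_zero hd⟩
  have hpk : (2 : ℝ) ^ S.k = 2 ^ S'.k := by
    have h1 := (hend i0).1
    have h2 := (hend i0).2
    nlinarith
  have hk : S.k = S'.k := zpow_right_injective₀ (by norm_num) (by norm_num) hpk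
  have hm : S.m = S'.m := by
    funext i
    have h1 := (hend i).1
    rw [hk] at h1
    have h2 : (S.m i : ℝ) = S'.m i := mul_right_cancel₀ (ne_of_gt hp') h1
    exact_mod_cast h2
  cases S; cases S'
  simp_all

lemma toSet_univ_of_d_eq_zero (hd : d = 0) (Q : DyadicCube d) : Q.toSet = Set.univ := by
  subst hd
  ext z
  simp only [DyadicCube.toSet, Set.mem_pi, Set.mem_univ, iff_true, true_implies]
  exact fun i => i.elim0

lemma measurableSet_toSet (Q : DyadicCube d) : MeasurableSet Q.toSet :=
  MeasurableSet.univ_pi fun i => measurableSet_Ico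

lemma volume_toSet (Q : DyadicCube d) :
    volume Q.toSet = (ENNReal.ofReal ((2 : ℝ) ^ Q.k)) ^ d := by
  rw [DyadicCube.toSet, volume_pi_pi]
  have h : ∀ i : Fin d, ((Q.m i : ℝ) + 1) * 2 ^ Q.k - Q.m i * 2 ^ Q.k = 2 ^ Q.k := by
    intro i; ring
  simp only [Real.volume_Ico, h]
  rw [Finset.prod_const, Finset.card_univ, Fintype.card_fin]

lemma volume_toSet_ne_zero (Q : DyadicCube d) : volume Q.toSet ≠ 0 := by
  rw [volume_toSet]
  exact pow_ne_zero _ (by simp [ENNReal.ofReal_pos]; positivity)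

lemma volume_toSet_ne_top (Q : DyadicCube d) : volume Q.toSet ≠ ⊤ := by
  rw [volume_toSet]
  exact ENNReal.pow_ne_top ENNReal.ofReal_ne_top


variable {d : ℕ}

lemma avg_le_max {w : (Fin d → ℝ) → ℝ} (hw : ∀ x, 0 ≤ w x) {Q₀ S : DyadicCube d}
    (hsub : S.toSet ⊆ Q₀.toSet) {x : Fin d → ℝ} (hx : x ∈ S.toSet) :
    wMeas w S.toSet / volume S.toSet ≤ 2 ^ d * maxFn (Q₀.toSet.indicator w) x := by
  set t : ℝ := 2 ^ S.k with ht
  have htpos : 0 < t := zpow_pos (by norm_num) _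
  set f := Q₀.toSet.indicator w with hfdef
  set E : Set (Fin d → ℝ) := Set.univ.pi fun i => Set.Icc (x i - t) (x i + t) with hE
  have hpre : (Set.univ.pi fun _ : Fin d => Set.Icc (-t) t) = (fun y => x + y) ⁻¹' E := by
    ext y
    simp only [Set.mem_pi, Set.mem_univ, true_implies, Set.mem_Icc, Set.mem_preimage, hE,
      Pi.add_apply]
    constructor
    · intro h i
      obtain ⟨h1, h2⟩ := h i
      constructor <;> linarith
    · intro h i
      obtain ⟨h1, h2⟩ := h i
      constructor <;> linarith
  have hmp := (measurePreserving_add_left (volume : Measure (Fin d → ℝ)) x)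
      |>.setLIntegral_comp_preimage_emb (MeasurableEquiv.addLeft x).measurableEmbedding
      (fun z => ENNReal.ofReal |f z|) E
  have hSE : S.toSet ⊆ E := by
    intro z hz
    rw [mem_toSet] at hz
    rw [mem_toSet] at hx
    intro i _
    obtain ⟨h1, h2⟩ := hz i
    obtain ⟨h3, h4⟩ := hx i
    simp only [Set.mem_Icc]
    constructor <;> [linarith; linarith]
  have hcong : ∫⁻ z in S.toSet, ENNReal.ofReal |f z| = wMeas w S.toSet := by
    rw [wMeas]
    refine setLIntegral_congr_fun (measurableSet_toSet S) ?_
    intro z hz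
    beta_reduce
    rw [hfdef, Set.indicator_of_mem (hsub hz), abs_of_nonneg (hw z)]
  have key : wMeas w S.toSet
      ≤ ∫⁻ y in Set.univ.pi fun _ : Fin d => Set.Icc (-t) t, ENNReal.ofReal |f (x + y)| := by
    rw [hpre]
    rw [hmp]
    rw [← hcong]
    exact lintegral_mono_set hSE
  have hterm : (ENNReal.ofReal ((2 * t) ^ d))⁻¹ *
      (∫⁻ y in Set.univ.pi fun _ : Fin d => Set.Icc (-t) t, ENNReal.ofReal |f (x + y)|)
      ≤ maxFn f x := by
    rw [maxFn]
    refine le_trans ?_ (le_iSup (fun r => ⨆ _ : 0 < r,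
      (ENNReal.ofReal ((2 * r) ^ d))⁻¹ *
        ∫⁻ y in Set.univ.pi fun _ : Fin d => Set.Icc (-r) r, ENNReal.ofReal |f (x + y)|) t)
    exact le_iSup (fun _ : 0 < t => (ENNReal.ofReal ((2 * t) ^ d))⁻¹ *
        ∫⁻ y in Set.univ.pi fun _ : Fin d => Set.Icc (-t) t, ENNReal.ofReal |f (x + y)|) htpos
  set V : ℝ≥0∞ := (ENNReal.ofReal t) ^ d with hV
  have h2d0 : (2 : ℝ≥0∞) ^ d ≠ 0 := by positivity
  have h2dt : (2 : ℝ≥0∞) ^ d ≠ ⊤ := ENNReal.pow_ne_top (by norm_num)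
  have hof : ENNReal.ofReal ((2 * t) ^ d) = 2 ^ d * V := by
    rw [ENNReal.ofReal_pow (by positivity), ENNReal.ofReal_mul (by norm_num), mul_pow, hV]
    norm_num
  calc wMeas w S.toSet / volume S.toSet = V⁻¹ * wMeas w S.toSet := by
        rw [volume_toSet, div_eq_mul_inv, mul_comm, hV, ht]
    _ ≤ V⁻¹ * (∫⁻ y in Set.univ.pi fun _ : Fin d => Set.Icc (-t) t,
          ENNReal.ofReal |f (x + y)|) := mul_le_mul_right key _
    _ = 2 ^ d * ((ENNReal.ofReal ((2 * t) ^ d))⁻¹ *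
          (∫⁻ y in Set.univ.pi fun _ : Fin d => Set.Icc (-t) t,
            ENNReal.ofReal |f (x + y)|)) := by
        rw [hof, ENNReal.mul_inv (Or.inl h2d0) (Or.inl h2dt), ← mul_assoc, ← mul_assoc,
          ENNReal.mul_inv_cancel h2d0 h2dt, one_mul]
    _ ≤ 2 ^ d * maxFn f x := mul_le_mul_right hterm _


variable {d : ℕ}

noncomputable def avg (w : (Fin d → ℝ) → ℝ) (Q : DyadicCube d) : ℝ≥0∞ :=
  wMeas w Q.toSet / volume Q.toSet

variable {w : (Fin d → ℝ) → ℝ} {Q₀ : DyadicCube d}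

lemma gen_subset : ∀ j, ∀ S ∈ stoppingGen w Q₀ j, S.toSet ⊆ Q₀.toSet := by
  intro j
  induction j with
  | zero =>
    intro S hS
    rw [stoppingGen, Set.mem_singleton_iff] at hS
    subst hS
    exact subset_rfl
  | succ j ih =>
    intro S hS
    rw [stoppingGen] at hS
    simp only [Set.mem_iUnion] at hS
    obtain ⟨P, hP, hSP⟩ := hS
    exact hSP.1.trans (ih P hP)

lemma avg_pos_gen (hQpos : 0 < wMeas w Q₀.toSet) :
    ∀ j, ∀ S ∈ stoppingGen w Q₀ j, 0 < avg w S := by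
  intro j
  induction j with
  | zero =>
    intro S hS
    rw [stoppingGen, Set.mem_singleton_iff] at hS
    subst hS
    rw [avg]
    exact ENNReal.div_pos (ne_of_gt hQpos) (volume_toSet_ne_top S)
  | succ j ih =>
    intro S hS
    rw [stoppingGen] at hS
    simp only [Set.mem_iUnion] at hS
    obtain ⟨P, hP, hSP⟩ := hS
    have h := hSP.2.1
    rw [BigAvg] at h
    exact lt_of_le_of_lt zero_le h

lemma avg_lt_top (hw : ∀ x, 0 ≤ w x) (hQfin : wMeas w Q₀.toSet < ⊤)
    {S : DyadicCube d} (hsub : S.toSet ⊆ Q₀.toSet) : avg w S < ⊤ := by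
  rw [avg]
  have hmono : wMeas w S.toSet ≤ wMeas w Q₀.toSet := lintegral_mono_set hsub
  exact ENNReal.div_lt_top (ne_of_lt (lt_of_le_of_lt hmono hQfin)) (volume_toSet_ne_zero S)

lemma gen_unique (x : Fin d → ℝ) : ∀ j, ∀ S ∈ stoppingGen w Q₀ j, ∀ S' ∈ stoppingGen w Q₀ j,
    x ∈ S.toSet → x ∈ S'.toSet → S = S' := by
  intro j
  induction j with
  | zero =>
    intro S hS S' hS' _ _
    rw [stoppingGen, Set.mem_singleton_iff] at hS hS'
    rw [hS, hS']
  | succ j ih =>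
    intro S hS S' hS' hxS hxS'
    rw [stoppingGen] at hS hS'
    simp only [Set.mem_iUnion] at hS hS'
    obtain ⟨P, hP, hSP⟩ := hS
    obtain ⟨P', hP', hSP'⟩ := hS'
    have hPP : P = P' := ih P hP P' hP' (hSP.1 hxS) (hSP'.1 hxS')
    subst hPP
    have hsets : S.toSet = S'.toSet := by
      rcases nested hxS hxS' with h | h
      · exact (hSP.2.2 S' h hSP'.1 hSP'.2.1).symm
      · exact hSP'.2.2 S h hSP.1 hSP.2.1
    rcases Nat.eq_zero_or_pos d with hd | hd
    · exfalso
      have hbig := hSP.2.1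
      rw [BigAvg, toSet_univ_of_d_eq_zero hd S, toSet_univ_of_d_eq_zero hd P] at hbig
      exact absurd hbig (not_lt.2 (le_mul_of_one_le_left zero_le (by norm_num)))
    · exact toSet_inj (by omega) hsets

lemma gen_growth (x : Fin d → ℝ) : ∀ n j, ∀ S ∈ stoppingGen w Q₀ j,
    ∀ S' ∈ stoppingGen w Q₀ (j + n), x ∈ S.toSet → x ∈ S'.toSet →
    (4 : ℝ≥0∞) ^ n * avg w S ≤ avg w S' := by
  intro n
  induction n with
  | zero =>
    intro j S hS S' hS' hx hx'
    rw [gen_unique x j S hS S' (by simpa using hS') hx hx']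
    simp
  | succ n ih =>
    intro j S hS S' hS' hx hx'
    have hrw : j + (n + 1) = (j + n) + 1 := rfl
    rw [hrw, stoppingGen] at hS'
    simp only [Set.mem_iUnion] at hS'
    obtain ⟨P, hP, hS'P⟩ := hS'
    have h1 := ih j S hS P hP hx (hS'P.1 hx')
    have h2 := hS'P.2.1
    rw [BigAvg] at h2
    calc (4 : ℝ≥0∞) ^ (n + 1) * avg w S = 4 * ((4 : ℝ≥0∞) ^ n * avg w S) := by ring
      _ ≤ 4 * avg w P := mul_le_mul_right h1 4
      _ ≤ avg w S' := h2.le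

lemma gen_index_unique (x : Fin d → ℝ) {j j' : ℕ} {S : DyadicCube d}
    (hS : S ∈ stoppingGen w Q₀ j) (hS' : S ∈ stoppingGen w Q₀ j') (hx : x ∈ S.toSet)
    (hpos : 0 < avg w S) (hfin : avg w S < ⊤) : j = j' := by
  have key : ∀ a b : ℕ, a ≤ b → S ∈ stoppingGen w Q₀ a → S ∈ stoppingGen w Q₀ b → a = b := by
    intro a b hab ha hb
    have hgrow := gen_growth x (b - a) a S ha S (by rwa [Nat.add_sub_cancel' hab]) hx hx
    have h1 : (4 : ℝ≥0∞) ^ (b - a) * avg w S ≤ 1 * avg w S := by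
      rwa [one_mul]
    have h2 : (4 : ℝ≥0∞) ^ (b - a) ≤ 1 :=
      (ENNReal.mul_le_mul_iff_left (ne_of_gt hpos) (ne_of_lt hfin)).mp h1
    have h3 : b - a = 0 := by
      by_contra hne
      have h4 : (4 : ℝ≥0∞) ≤ 4 ^ (b - a) :=
        le_self_pow₀ (by norm_num) hne
      have := h4.trans h2
      norm_num at this
    omega
  rcases le_total j j' with h | h
  · exact key j j' h hS hS'
  · exact (key j' j h hS' hS).symm


end Aux7

/-- Pointwise bound: `Σ_{S ∈ 𝓢(Q₀)} (w(S)/|S|) 1_S(x) ≤ C_d M(w 1_{Q₀})(x)` for a.e. `x ∈ Q₀`. -/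
theorem stmt7 (d : ℕ) :
    ∃ C : ℝ, 0 < C ∧
      ∀ (w : (Fin d → ℝ) → ℝ), LocallyIntegrable w volume → (∀ x, 0 ≤ w x) →
        ∀ Q₀ : DyadicCube d, 0 < wMeas w Q₀.toSet → wMeas w Q₀.toSet < ∞ →
          ∀ᵐ x : Fin d → ℝ, x ∈ Q₀.toSet →
            (∑' S : stoppingCubes w Q₀,
                (wMeas w (S : DyadicCube d).toSet / volume (S : DyadicCube d).toSet) *
                  (S : DyadicCube d).toSet.indicator (fun _ => (1 : ℝ≥0∞)) x)
              ≤ ENNReal.ofReal C * maxFn (Q₀.toSet.indicator w) x := by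
  classical
  refine ⟨2 * 2 ^ d, by positivity, ?_⟩
  intro w _hloc hw Q₀ hQpos hQfin
  refine Filter.Eventually.of_forall fun x _hx => ?_
  rw [ENNReal.tsum_eq_iSup_sum]
  refine iSup_le fun F => ?_
  set f : ↥(stoppingCubes w Q₀) → ℝ≥0∞ := fun S : ↥(stoppingCubes w Q₀) =>
    (wMeas w (S : DyadicCube d).toSet / volume (S : DyadicCube d).toSet) *
      (S : DyadicCube d).toSet.indicator (fun _ => (1 : ℝ≥0∞)) x with hf
  set G := F.filter (fun S : ↥(stoppingCubes w Q₀) => x ∈ (S : DyadicCube d).toSet) with hGdef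
  have hsum : ∑ S ∈ F, f S = ∑ S ∈ G, Aux7.avg w (S : DyadicCube d) := by
    rw [← Finset.sum_filter_add_sum_filter_not F (fun S : ↥(stoppingCubes w Q₀) => x ∈ (S : DyadicCube d).toSet) f]
    have h1 : ∑ S ∈ F.filter (fun S : ↥(stoppingCubes w Q₀) => ¬ x ∈ (S : DyadicCube d).toSet), f S = 0 := by
      refine Finset.sum_eq_zero fun S hS => ?_
      rw [hf]
      simp only
      rw [Set.indicator_of_notMem (Finset.mem_filter.mp hS).2, mul_zero]
    rw [h1, add_zero]
    refine Finset.sum_congr rfl fun S hS => ?_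
    rw [hf]
    simp only
    rw [Set.indicator_of_mem (Finset.mem_filter.mp hS).2, mul_one, Aux7.avg]
  rw [hsum]
  rcases G.eq_empty_or_nonempty with hGe | hGne
  · rw [hGe]
    simp
  have hgen : ∀ S : ↥(stoppingCubes w Q₀), ∃ j, (S : DyadicCube d) ∈ stoppingGen w Q₀ j :=
    fun S => Set.mem_iUnion.mp S.2
  choose n hn using hgen
  obtain ⟨S₀, hS₀G, hS₀max⟩ := G.exists_max_image n hGne
  have hxG : ∀ S ∈ G, x ∈ (S : DyadicCube d).toSet := fun S hS =>
    (Finset.mem_filter.mp hS).2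
  have hbound : ∀ S ∈ G, Aux7.avg w (S : DyadicCube d)
      ≤ (4 : ℝ≥0∞)⁻¹ ^ (n S₀ - n S) * Aux7.avg w (S₀ : DyadicCube d) := by
    intro S hS
    have hle : n S ≤ n S₀ := hS₀max S hS
    have hgrow := Aux7.gen_growth x (n S₀ - n S) (n S) _ (hn S) _
      (by rw [Nat.add_sub_cancel' hle]; exact hn S₀) (hxG S hS) (hxG S₀ hS₀G)
    have h40 : ((4 : ℝ≥0∞) ^ (n S₀ - n S)) ≠ 0 := pow_ne_zero _ (by norm_num)
    have h4t : ((4 : ℝ≥0∞) ^ (n S₀ - n S)) ≠ ⊤ := ENNReal.pow_ne_top (by norm_num)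
    calc Aux7.avg w (S : DyadicCube d)
        = (4 : ℝ≥0∞)⁻¹ ^ (n S₀ - n S) *
            ((4 : ℝ≥0∞) ^ (n S₀ - n S) * Aux7.avg w (S : DyadicCube d)) := by
          rw [← mul_assoc, ← ENNReal.inv_pow, ENNReal.inv_mul_cancel h40 h4t, one_mul]
      _ ≤ (4 : ℝ≥0∞)⁻¹ ^ (n S₀ - n S) * Aux7.avg w (S₀ : DyadicCube d) :=
          mul_le_mul_right hgrow _
  have hinj : ∀ S ∈ G, ∀ S' ∈ G, n S₀ - n S = n S₀ - n S' → S = S' := by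
    intro S hS S' hS' hEq
    have h1 : n S = n S' := by
      have hle := hS₀max S hS
      have hle' := hS₀max S' hS'
      omega
    have h2 : (S : DyadicCube d) = (S' : DyadicCube d) :=
      Aux7.gen_unique x (n S) _ (hn S) _ (h1 ▸ hn S') (hxG S hS) (hxG S' hS')
    exact Subtype.ext h2
  calc ∑ S ∈ G, Aux7.avg w (S : DyadicCube d)
      ≤ ∑ S ∈ G, (4 : ℝ≥0∞)⁻¹ ^ (n S₀ - n S) * Aux7.avg w (S₀ : DyadicCube d) :=
        Finset.sum_le_sum hbound
    _ = (∑ S ∈ G, (4 : ℝ≥0∞)⁻¹ ^ (n S₀ - n S)) * Aux7.avg w (S₀ : DyadicCube d) := by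
        rw [← Finset.sum_mul]
    _ ≤ 2 * Aux7.avg w (S₀ : DyadicCube d) := by
        refine mul_le_mul_left ?_ _
        calc ∑ S ∈ G, (4 : ℝ≥0∞)⁻¹ ^ (n S₀ - n S)
            = ∑ k ∈ G.image (fun S : ↥(stoppingCubes w Q₀) => n S₀ - n S), (4 : ℝ≥0∞)⁻¹ ^ k :=
              (Finset.sum_image hinj).symm
          _ ≤ ∑' k : ℕ, (4 : ℝ≥0∞)⁻¹ ^ k := ENNReal.sum_le_tsum _
          _ ≤ ∑' k : ℕ, (2 : ℝ≥0∞)⁻¹ ^ k := by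
              refine ENNReal.tsum_le_tsum fun k => ?_
              refine pow_le_pow_left' ?_ k
              rw [ENNReal.inv_le_inv]
              norm_num
          _ = 2 := by
              rw [ENNReal.tsum_geometric, ENNReal.one_sub_inv_two, inv_inv]
    _ ≤ 2 * (2 ^ d * maxFn (Q₀.toSet.indicator w) x) :=
        mul_le_mul_right
          (Aux7.avg_le_max hw (Aux7.gen_subset (n S₀) _ (hn S₀)) (hxG S₀ hS₀G)) _
    _ = ((2 : ℝ≥0∞) * 2 ^ d) * maxFn (Q₀.toSet.indicator w) x := (mul_assoc _ _ _).symm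
    _ = ENNReal.ofReal (2 * 2 ^ d) * maxFn (Q₀.toSet.indicator w) x := by
        rw [ENNReal.ofReal_mul (by norm_num), ENNReal.ofReal_pow (by norm_num)]
        norm_num
end

section
/- Let 𝓢 be a Haar shift of complexity κ with kernel representation 𝓢f = Σ_{Q ∈ 𝓓} |Q|⁻¹ ∫_Q f(y) s_Q(·,y) dy, s_Q supported on Q × Q with ‖s_Q‖_∞ ≤ 1. Let g be an integrable function whose support is disjoint from Q^{(κ)}, the κ-fold dyadic parent of a dyadic cube Q₀. Then 𝓢g is constant on Q₀; in fact every term |R|⁻¹∫ g s_R(x,y) dy with R ∈ 𝓓 that is nonzero for some x ∈ Q₀ is constant in x on Q₀. -/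
open MeasureTheory Set
open scoped ENNReal

/-- The dyadic parent of a dyadic cube. -/
def DyadicCube.parent {d : ℕ} (Q : DyadicCube d) : DyadicCube d :=
  ⟨Q.k + 1, fun i => Int.fdiv (Q.m i) 2⟩

/-- The `κ`-fold dyadic parent `Q^{(κ)}` of a dyadic cube `Q`. -/
def DyadicCube.parentIter {d : ℕ} (κ : ℕ) (Q : DyadicCube d) : DyadicCube d :=
  DyadicCube.parent^[κ] Q

lemma aux_mem_toSet {d : ℕ} {Q : DyadicCube d} {x : Fin d → ℝ} :
    x ∈ Q.toSet ↔ ∀ i, (Q.m i : ℝ) * 2 ^ Q.k ≤ x i ∧ x i < ((Q.m i : ℝ) + 1) * 2 ^ Q.k := by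
  simp [DyadicCube.toSet, Set.mem_pi, Set.mem_Ico]

lemma aux_coord_floor {k m : ℤ} {x : ℝ} (h1 : (m : ℝ) * 2 ^ k ≤ x)
    (h2 : x < ((m : ℝ) + 1) * 2 ^ k) : m = ⌊x / (2 : ℝ) ^ k⌋ := by
  have hp : (0 : ℝ) < (2 : ℝ) ^ k := zpow_pos (by norm_num) k
  symm
  rw [Int.floor_eq_iff]
  constructor
  · rw [le_div_iff₀ hp]; exact h1
  · rw [div_lt_iff₀ hp]; push_cast; exact h2

lemma aux_parent_subset {d : ℕ} (Q : DyadicCube d) : Q.toSet ⊆ Q.parent.toSet := by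
  intro x hx
  rw [aux_mem_toSet] at hx ⊢
  intro i
  obtain ⟨h1, h2⟩ := hx i
  have hp : (0 : ℝ) < (2 : ℝ) ^ Q.k := zpow_pos (by norm_num) Q.k
  have hfd : (Q.m i).fdiv 2 = Q.m i / 2 := Int.fdiv_eq_ediv_of_nonneg _ (by norm_num)
  have hint : 2 * (Q.m i / 2) ≤ Q.m i ∧ Q.m i ≤ 2 * (Q.m i / 2) + 1 := by omega
  have hz : (2 : ℝ) ^ (Q.k + 1) = 2 * 2 ^ Q.k := by
    rw [zpow_add_one₀ (by norm_num : (2:ℝ) ≠ 0)]; ring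
  constructor
  · show ((Q.m i).fdiv 2 : ℝ) * 2 ^ (Q.k + 1) ≤ x i
    rw [hfd, hz]
    have : ((Q.m i / 2 : ℤ) : ℝ) * (2 * 2 ^ Q.k) ≤ (Q.m i : ℝ) * 2 ^ Q.k := by
      have : ((2 * (Q.m i / 2) : ℤ) : ℝ) ≤ ((Q.m i : ℤ) : ℝ) := by exact_mod_cast hint.1
      push_cast at this ⊢
      nlinarith
    linarith
  · show x i < (((Q.m i).fdiv 2 : ℝ) + 1) * 2 ^ (Q.k + 1)
    rw [hfd, hz]
    have : ((Q.m i : ℝ) + 1) * 2 ^ Q.k ≤ (((Q.m i / 2 : ℤ) : ℝ) + 1) * (2 * 2 ^ Q.k) := by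
      have : ((Q.m i : ℤ) : ℝ) ≤ ((2 * (Q.m i / 2) + 1 : ℤ) : ℝ) := by exact_mod_cast hint.2
      push_cast at this ⊢
      nlinarith
    linarith

lemma aux_parentIter_k {d : ℕ} (n : ℕ) (Q : DyadicCube d) :
    (DyadicCube.parentIter n Q).k = Q.k + n := by
  induction n with
  | zero => simp [DyadicCube.parentIter]
  | succ n ih =>
    rw [DyadicCube.parentIter, Function.iterate_succ_apply']
    show (DyadicCube.parent _).k = _
    rw [DyadicCube.parent]
    simp only
    rw [show DyadicCube.parent^[n] Q = DyadicCube.parentIter n Q from rfl, ih]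
    push_cast; ring

lemma aux_parentIter_subset {d : ℕ} (n : ℕ) (Q : DyadicCube d) :
    Q.toSet ⊆ (DyadicCube.parentIter n Q).toSet := by
  induction n with
  | zero => simp [DyadicCube.parentIter]
  | succ n ih =>
    rw [DyadicCube.parentIter, Function.iterate_succ_apply']
    exact ih.trans (aux_parent_subset _)

lemma aux_same_scale {d : ℕ} {Q₁ Q₂ : DyadicCube d} {x : Fin d → ℝ}
    (h : Q₁.k = Q₂.k) (h1 : x ∈ Q₁.toSet) (h2 : x ∈ Q₂.toSet) : Q₁ = Q₂ := by
  rw [aux_mem_toSet] at h1 h2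
  obtain ⟨k₁, m₁⟩ := Q₁; obtain ⟨k₂, m₂⟩ := Q₂
  simp only at h h1 h2
  subst h
  congr 1
  funext i
  rw [aux_coord_floor (h1 i).1 (h1 i).2, aux_coord_floor (h2 i).1 (h2 i).2]

lemma aux_nesting {d : ℕ} {Q₁ Q₂ : DyadicCube d} {x : Fin d → ℝ}
    (hk : Q₁.k ≤ Q₂.k) (h1 : x ∈ Q₁.toSet) (h2 : x ∈ Q₂.toSet) :
    Q₁.toSet ⊆ Q₂.toSet := by
  set n := (Q₂.k - Q₁.k).toNat with hn
  have hkey : DyadicCube.parentIter n Q₁ = Q₂ := by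
    apply aux_same_scale _ (aux_parentIter_subset n Q₁ h1) h2
    rw [aux_parentIter_k]; omega
  rw [← hkey]
  exact aux_parentIter_subset n Q₁

/-- For a Haar shift of complexity `κ` with kernels `s_R` supported on `R × R`, bounded by 1,
and (as for Haar shifts) with `s_R(·,y)` constant on dyadic cubes of side `2^{-κ-1}ℓ(R)`:
if `g` vanishes on `Q₀^{(κ)}`, then `𝓢g` is constant on `Q₀`, and indeed every term
`|R|⁻¹ ∫ g(y) s_R(·,y) dy` is constant on `Q₀`. -/
theorem stmt16 (d κ : ℕ) (s : DyadicCube d → (Fin d → ℝ) → (Fin d → ℝ) → ℝ)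
    (hsupp : ∀ (R : DyadicCube d) (x y), x ∉ R.toSet ∨ y ∉ R.toSet → s R x y = 0)
    (hbdd : ∀ (R : DyadicCube d) (x y), |s R x y| ≤ 1)
    (hconst : ∀ R J : DyadicCube d, J.k = R.k - κ - 1 →
      ∀ y : Fin d → ℝ, ∀ x ∈ J.toSet, ∀ x' ∈ J.toSet, s R x y = s R x' y)
    (g : (Fin d → ℝ) → ℝ) (hg : Integrable g volume)
    (Q₀ : DyadicCube d)
    (hdisj : ∀ y ∈ (DyadicCube.parentIter κ Q₀).toSet, g y = 0) :
    ∀ x ∈ Q₀.toSet, ∀ x' ∈ Q₀.toSet,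
      (∀ R : DyadicCube d,
        ((volume R.toSet).toReal)⁻¹ * ∫ y in R.toSet, g y * s R x y
          = ((volume R.toSet).toReal)⁻¹ * ∫ y in R.toSet, g y * s R x' y) ∧
      (∑' R : DyadicCube d, ((volume R.toSet).toReal)⁻¹ * ∫ y in R.toSet, g y * s R x y)
        = ∑' R : DyadicCube d, ((volume R.toSet).toReal)⁻¹ * ∫ y in R.toSet, g y * s R x' y := by
  intro x hx x' hx'
  have hmeas : ∀ R : DyadicCube d, MeasurableSet R.toSet := fun R =>
    MeasurableSet.univ_pi fun i => measurableSet_Ico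
  have key : ∀ R : DyadicCube d,
      ((volume R.toSet).toReal)⁻¹ * ∫ y in R.toSet, g y * s R x y
        = ((volume R.toSet).toReal)⁻¹ * ∫ y in R.toSet, g y * s R x' y := by
    intro R
    by_cases hk : Q₀.k ≤ R.k - κ - 1
    · -- fine scale: s R is constant on a cube containing Q₀
      set n := (R.k - κ - 1 - Q₀.k).toNat with hn
      set J := DyadicCube.parentIter n Q₀ with hJ
      have hJk : J.k = R.k - κ - 1 := by rw [hJ, aux_parentIter_k]; omega
      have hsub : Q₀.toSet ⊆ J.toSet := aux_parentIter_subset n Q₀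
      have : ∀ y, s R x y = s R x' y := fun y =>
        hconst R J hJk y x (hsub hx) x' (hsub hx')
      congr 1
      exact setIntegral_congr_fun (hmeas R) fun y _ => by rw [this y]
    · -- coarse scale: both integrals vanish
      have hk' : R.k ≤ Q₀.k + κ := by omega
      have hzero : ∀ z ∈ Q₀.toSet, (∫ y in R.toSet, g y * s R z y) = 0 := by
        intro z hz
        by_cases hzR : z ∈ R.toSet
        · have hsub : R.toSet ⊆ (DyadicCube.parentIter κ Q₀).toSet := by
            apply aux_nesting _ hzR (aux_parentIter_subset κ Q₀ hz)
            rw [aux_parentIter_k]; omega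
          rw [setIntegral_congr_fun (hmeas R) (fun y hy => ?_), integral_zero]
          rw [hdisj y (hsub hy), zero_mul]
        · rw [setIntegral_congr_fun (hmeas R) (fun y hy => ?_), integral_zero]
          rw [hsupp R z y (Or.inl hzR), mul_zero]
      rw [hzero x hx, hzero x' hx']
  exact ⟨key, tsum_congr key⟩
end
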